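/- For every natural number ℓ, the polynomial x^(2·3^ℓ) + x^(3^ℓ) + 1 is irreducible over the field with two elements F_2. -/

import Mathlib

open Polynomial

lemma key (j : ℕ) : ∃ u : ℤ, (2:ℤ)^(3^j) + 1 = 3^(j+1) * u ∧ ¬ (3:ℤ) ∣ u := by
  induction j with
  | zero => exact ⟨1, by norm_num⟩
  | succ j ih =>
    obtain ⟨u, hu, hu3⟩ := ih
    set a : ℤ := 2 ^ (3^j) with ha
    refine ⟨u * (3^(2*j+1) * u^2 - a), ?_, ?_⟩
    · have h1 : (2:ℤ)^(3^(j+1)) = a^3 := by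
        rw [ha, ← pow_mul, pow_succ, mul_comm]
      have h2 : a^3 + 1 = (a+1) * (a^2 - a + 1) := by ring
      have h3 : a^2 - a + 1 = 3 * (3^(2*j+1) * u^2 - a) := by
        have : a + 1 = 3^(j+1) * u := hu
        have h4 : a = 3^(j+1) * u - 1 := by linarith
        rw [h4]; ring
      rw [h1, h2, hu, h3]; ring
    · intro h
      rcases (Int.Prime.dvd_mul' (by norm_num) h) with h | h
      · exact hu3 h
      · have h3a : ¬ (3:ℤ) ∣ a := by
          intro hd
          have : (3:ℤ) ∣ 1 := by
            have h4 : (1:ℤ) = 3^(j+1) * u - a := by linarith [hu]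
            rw [h4]
            exact dvd_sub (Dvd.dvd.mul_right (dvd_pow_self 3 (Nat.succ_ne_zero j)) u) hd
          norm_num at this
        have : (3:ℤ) ∣ a := by
          have hd3 : (3:ℤ) ∣ 3^(2*j+1) * u^2 := Dvd.dvd.mul_right (dvd_pow_self 3 (by omega)) _
          have := dvd_sub hd3 h
          simpa using this
        exact h3a this


lemma ord2 (ℓ d : ℕ) (hd : 0 < d) (hdvd : ((3:ℤ)^(ℓ+1)) ∣ 2^d - 1) : 2*3^ℓ ≤ d := by
  set n : ℕ := 3^(ℓ+1) with hn
  have hcop : Nat.Coprime 2 n := by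
    exact Nat.Coprime.pow_right _ (by decide)
  set u : (ZMod n)ˣ := ZMod.unitOfCoprime 2 hcop with hu
  have hcast3 : ((3:ZMod n))^(ℓ+1) = 0 := by
    have := ZMod.natCast_self n
    push_cast [hn] at this
    exact_mod_cast this
  have hneg : (2 : ZMod n)^(3^ℓ) = -1 := by
    obtain ⟨v, hv, -⟩ := key ℓ
    have := congrArg (Int.cast : ℤ → ZMod n) hv
    push_cast at this
    rw [hcast3] at this
    linear_combination this
  have hucoe : (u : ZMod n) = 2 := ZMod.coe_unitOfCoprime 2 hcop
  have hord : orderOf u = 2*3^ℓ := by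
    apply orderOf_eq_of_pow_and_pow_div_prime (by positivity)
    · ext
      push_cast [hucoe]
      rw [mul_comm, pow_mul, hneg]; ring
    · intro p hp hpd
      rcases (Nat.Prime.dvd_mul hp).mp hpd with h2 | h3
      · have hp2 : p = 2 := (Nat.prime_dvd_prime_iff_eq hp Nat.prime_two).mp h2
        subst hp2
        intro hcon
        have : ((u ^ (2 * 3 ^ ℓ / 2) : (ZMod n)ˣ) : ZMod n) = 1 := by rw [hcon]; rfl
        rw [Nat.mul_div_cancel_left _ (by norm_num)] at this
        push_cast [hucoe] at this
        rw [hneg] at this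
        have h2n : Fact (2 < n) := ⟨by
          have : 3 ≤ 3^(ℓ+1) := Nat.le_self_pow (Nat.succ_ne_zero ℓ) 3
          omega⟩
        exact ZMod.neg_one_ne_one this
      · have hp3 : p = 3 := Nat.prime_dvd_prime_iff_eq hp Nat.prime_three |>.mp
          (hp.dvd_of_dvd_pow h3)
        subst hp3
        have hl : ℓ ≠ 0 := by
          rintro rfl; simp at h3
        obtain ⟨m, rfl⟩ : ∃ m, ℓ = m + 1 := ⟨ℓ - 1, by omega⟩
        intro hcon
        have hdiv : 2 * 3 ^ (m+1) / 3 = 2 * 3 ^ m := by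
          rw [pow_succ, ← mul_assoc, Nat.mul_div_cancel _ (by norm_num)]
        rw [hdiv] at hcon
        have hz : ((u ^ (2 * 3 ^ m) : (ZMod n)ˣ) : ZMod n) = 1 := by rw [hcon]; rfl
        push_cast [hucoe] at hz
        have hzz : ((2^(2*3^m) - 1 : ℤ) : ZMod n) = 0 := by push_cast [hz]; ring
        rw [ZMod.intCast_zmod_eq_zero_iff_dvd] at hzz
        obtain ⟨v, hv, hv3⟩ := key m
        have hfac : (2:ℤ)^(2*3^m) - 1 = (2^(3^m) - 1) * (3^(m+1) * v) := by
          rw [← hv]; ring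
        have hw3 : ¬ (3:ℤ) ∣ (2^(3^m) - 1) * v := by
          intro h
          rcases Int.Prime.dvd_mul' (by norm_num) h with h | h
          · have : (3:ℤ) ∣ 2 := by
              have h2 : (2:ℤ) = 3^(m+1) * v - (2^(3^m) - 1) := by linarith
              rw [h2]
              exact dvd_sub (Dvd.dvd.mul_right (dvd_pow_self 3 (Nat.succ_ne_zero m)) v) h
            norm_num at this
          · exact hv3 h
        have hnz : (n:ℤ) = 3^(m+2) := by push_cast [hn]; ring
        rw [hnz, hfac] at hzz
        have h32 : (3:ℤ)^(m+2) = 3^(m+1) * 3 := by ring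
        have hzz' : (3:ℤ)^(m+1) * 3 ∣ 3^(m+1) * ((2^(3^m) - 1) * v) := by
          rw [← h32]
          calc (3:ℤ)^(m+2) ∣ (2^(3^m) - 1) * (3^(m+1) * v) := hzz
          _ = 3^(m+1) * ((2^(3^m) - 1) * v) := by ring
        exact hw3 ((mul_dvd_mul_iff_left (pow_ne_zero (m+1) (by norm_num : (3:ℤ) ≠ 0))).mp hzz')
  have hud : u ^ d = 1 := by
    ext
    push_cast [hucoe]
    have : ((2^d - 1 : ℤ) : ZMod n) = 0 := by
      rw [ZMod.intCast_zmod_eq_zero_iff_dvd]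
      exact_mod_cast hdvd
    push_cast at this
    linear_combination this
  have := orderOf_dvd_of_pow_eq_one hud
  rw [hord] at this
  exact Nat.le_of_dvd hd this


lemma cyc_irr (ℓ : ℕ) : Irreducible (cyclotomic (3^(ℓ+1)) (ZMod 2)) := by
  set n : ℕ := 3^(ℓ+1) with hn
  set P : (ZMod 2)[X] := cyclotomic n (ZMod 2) with hP
  have hmonic : P.Monic := cyclotomic.monic n _
  have hdegP : P.natDegree = 2 * 3^ℓ := by
    rw [hP, natDegree_cyclotomic, hn,
      Nat.totient_prime_pow Nat.prime_three (Nat.succ_pos ℓ)]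
    simp [mul_comm]
  have hP0 : P ≠ 0 := hmonic.ne_zero
  have hPnotunit : ¬ IsUnit P := by
    intro h
    have := natDegree_eq_zero_of_isUnit h
    have h3 : 0 < 3^ℓ := Nat.pow_pos (by norm_num)
    omega
  obtain ⟨g, hgirr, hgdvd⟩ := WfDvdMonoid.exists_irreducible_factor hPnotunit hP0
  have hg0 : g ≠ 0 := hgirr.ne_zero
  have hgmonic : g.Monic := by
    have h1 : g.leadingCoeff ≠ 0 := leadingCoeff_ne_zero.mpr hg0
    have : ∀ a : ZMod 2, a ≠ 0 → a = 1 := by decide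
    exact this _ h1
  haveI := Fact.mk hgirr
  set K := AdjoinRoot g with hK
  let pb := AdjoinRoot.powerBasis hg0
  haveI : Fintype K := Module.fintypeOfFintype pb.basis
  have hcard : Fintype.card K = 2 ^ g.natDegree := by
    rw [Module.card_fintype pb.basis, ZMod.card]
    congr 1
    simp [pb, AdjoinRoot.powerBasis]
  -- char facts
  have h2K : (2 : K) = 0 := by
    have h0 : ((2:ℕ):ZMod 2) = 0 := by decide
    calc (2:K) = ((2:ℕ):K) := by norm_num
    _ = algebraMap (ZMod 2) K ((2:ℕ):ZMod 2) := (map_natCast _ 2).symm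
    _ = 0 := by rw [h0, map_zero]
  have hnK : (n : K) = 1 := by
    push_cast [hn]
    have h3 : (3:K) = 1 := by
      have : (3:K) = 2 + 1 := by norm_num
      rw [this, h2K, zero_add]
    rw [h3, one_pow]
  haveI : NeZero (n : K) := ⟨by rw [hnK]; exact one_ne_zero⟩
  -- the root
  set μ : K := AdjoinRoot.root g with hμ
  have hrootP : IsRoot (Polynomial.map (algebraMap (ZMod 2) K) P) μ := by
    obtain ⟨c, hc⟩ := hgdvd
    have hg : Polynomial.eval μ (Polynomial.map (algebraMap (ZMod 2) K) g) = 0 := by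
      rw [Polynomial.eval_map, AdjoinRoot.algebraMap_eq]
      exact AdjoinRoot.eval₂_root g
    rw [hc, Polynomial.map_mul]
    show Polynomial.eval μ _ = 0
    rw [Polynomial.eval_mul, hg, zero_mul]
  have hprim : IsPrimitiveRoot μ n := by
    rw [hP, map_cyclotomic] at hrootP
    exact (isRoot_cyclotomic_iff).mp hrootP
  have hnpos : 0 < n := Nat.pow_pos (by norm_num)
  obtain ⟨w, hw⟩ := hprim.isUnit hnpos.ne'
  have hordw : orderOf w = n := by
    rw [← orderOf_units, hw, ← hprim.eq_orderOf]
  have hdvdcard : n ∣ Fintype.card Kˣ := by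
    rw [← hordw]; exact orderOf_dvd_card
  classical
  rw [Fintype.card_units, hcard] at hdvdcard
  have hdpos : 0 < g.natDegree := hgirr.natDegree_pos
  have hdvdInt : ((3:ℤ)^(ℓ+1)) ∣ 2^(g.natDegree) - 1 := by
    have h1 : (1:ℕ) ≤ 2 ^ g.natDegree := Nat.one_le_two_pow
    have h2 := Int.natCast_dvd_natCast.mpr hdvdcard
    rw [hn] at h2
    push_cast [Nat.cast_sub h1] at h2
    exact_mod_cast h2
  have hge := ord2 ℓ g.natDegree hdpos hdvdInt
  have hle : g.natDegree ≤ P.natDegree := natDegree_le_of_dvd hgdvd hP0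
  have heq : P = g :=
    eq_of_monic_of_dvd_of_natDegree_le hgmonic hmonic hgdvd (by omega)
  rw [heq]; exact hgirr

/-- For every natural number ℓ, the polynomial x^(2·3^ℓ) + x^(3^ℓ) + 1 is irreducible over F₂. -/
theorem stmt0 (ℓ : ℕ) :
    Irreducible (X ^ (2 * 3 ^ ℓ) + X ^ (3 ^ ℓ) + 1 : Polynomial (ZMod 2)) := by
  have h := cyc_irr ℓ
  have heq : cyclotomic (3^(ℓ+1)) (ZMod 2)
      = X ^ (2 * 3 ^ ℓ) + X ^ (3 ^ ℓ) + 1 := by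
    rw [cyclotomic_prime_pow_eq_geom_sum Nat.prime_three]
    rw [Finset.sum_range_succ, Finset.sum_range_succ, Finset.sum_range_one]
    rw [← pow_mul, ← pow_mul]
    ring
  rwa [heq] at h
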